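/- Let α, β ∈ ℝ with β ≠ 0, and suppose the complex numbers η1 = α + iβ, η2 = α - iβ, η3 = -2α satisfy η1 e^{-η1 L} = η2 e^{-η2 L} = η3 e^{-η3 L} for some L > 0. Then the function φ(x) = -β e^{αx} cos(βx) + β e^{-2αx} + 3α e^{αx} sin(βx) satisfies φ(0) = 0, φ'(0) = 0, φ(L) = 0, and φ''(L) = 0. -/

import Mathlib

/-- `η₁ = α + iβ` -/
noncomputable def eta1 (α β : ℝ) : ℂ := (α : ℂ) + (β : ℂ) * Complex.I

/-- `η₂ = α - iβ` -/
noncomputable def eta2 (α β : ℝ) : ℂ := (α : ℂ) - (β : ℂ) * Complex.I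

/-- `η₃ = -2α` -/
noncomputable def eta3 (α : ℝ) : ℂ := -2 * (α : ℂ)

/-- `φ(x) = -β e^{αx} cos(βx) + β e^{-2αx} + 3α e^{αx} sin(βx)` -/
noncomputable def phiFun (α β : ℝ) (x : ℝ) : ℝ :=
  -β * Real.exp (α * x) * Real.cos (β * x) + β * Real.exp (-2 * α * x)
    + 3 * α * Real.exp (α * x) * Real.sin (β * x)

lemma aux_hasDeriv (α β x : ℝ) : HasDerivAt (phiFun α β)
    (2*α*β*Real.exp (α*x)*Real.cos (β*x) + (β^2+3*α^2)*Real.exp (α*x)*Real.sin (β*x)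
      - 2*α*β*Real.exp (-2*α*x)) x := by
  have he : HasDerivAt (fun y : ℝ => Real.exp (α*y)) (Real.exp (α*x) * α) x := by
    simpa using ((hasDerivAt_id x).const_mul α).exp
  have hf : HasDerivAt (fun y : ℝ => Real.exp (-2*α*y)) (Real.exp (-2*α*x) * (-2*α)) x := by
    simpa using ((hasDerivAt_id x).const_mul (-2*α)).exp
  have hc : HasDerivAt (fun y : ℝ => Real.cos (β*y)) (-Real.sin (β*x) * β) x := by
    simpa using ((hasDerivAt_id x).const_mul β).cos
  have hs : HasDerivAt (fun y : ℝ => Real.sin (β*y)) (Real.cos (β*x) * β) x := by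
    simpa using ((hasDerivAt_id x).const_mul β).sin
  have h1 := ((he.mul hc).const_mul (-β)).add ((hf.const_mul β).add ((he.mul hs).const_mul (3*α)))
  have hfun : phiFun α β = fun y => -β * (Real.exp (α*y) * Real.cos (β*y)) +
      (β * Real.exp (-2*α*y) + 3*α*(Real.exp (α*y) * Real.sin (β*y))) := by
    funext y; simp only [phiFun]; ring
  rw [hfun]
  refine h1.congr_deriv ?_
  ring

lemma aux_deriv (α β : ℝ) : deriv (phiFun α β) = fun x =>
    2*α*β*Real.exp (α*x)*Real.cos (β*x) + (β^2+3*α^2)*Real.exp (α*x)*Real.sin (β*x)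
      - 2*α*β*Real.exp (-2*α*x) := funext fun x => (aux_hasDeriv α β x).deriv

lemma aux_hasDeriv2 (α β x : ℝ) : HasDerivAt (deriv (phiFun α β))
    ((5*α^2*β+β^3)*Real.exp (α*x)*Real.cos (β*x) + (3*α^3-α*β^2)*Real.exp (α*x)*Real.sin (β*x)
      + 4*α^2*β*Real.exp (-2*α*x)) x := by
  have he : HasDerivAt (fun y : ℝ => Real.exp (α*y)) (Real.exp (α*x) * α) x := by
    simpa using ((hasDerivAt_id x).const_mul α).exp
  have hf : HasDerivAt (fun y : ℝ => Real.exp (-2*α*y)) (Real.exp (-2*α*x) * (-2*α)) x := by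
    simpa using ((hasDerivAt_id x).const_mul (-2*α)).exp
  have hc : HasDerivAt (fun y : ℝ => Real.cos (β*y)) (-Real.sin (β*x) * β) x := by
    simpa using ((hasDerivAt_id x).const_mul β).cos
  have hs : HasDerivAt (fun y : ℝ => Real.sin (β*y)) (Real.cos (β*x) * β) x := by
    simpa using ((hasDerivAt_id x).const_mul β).sin
  have h1 := (((he.mul hc).const_mul (2*α*β)).add ((he.mul hs).const_mul (β^2+3*α^2))).sub
    (hf.const_mul (2*α*β))
  have hfun : deriv (phiFun α β) = fun y => 2*α*β*(Real.exp (α*y) * Real.cos (β*y)) +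
      (β^2+3*α^2)*(Real.exp (α*y) * Real.sin (β*y)) - 2*α*β*Real.exp (-2*α*y) := by
    rw [aux_deriv]; funext y; ring
  rw [hfun]
  refine h1.congr_deriv ?_
  ring

theorem stmt_3 (α β L : ℝ) (hβ : β ≠ 0) (hL : 0 < L)
    (h12 : eta1 α β * Complex.exp (-(eta1 α β) * (L : ℂ))
        = eta2 α β * Complex.exp (-(eta2 α β) * (L : ℂ)))
    (h23 : eta2 α β * Complex.exp (-(eta2 α β) * (L : ℂ))
        = eta3 α * Complex.exp (-(eta3 α) * (L : ℂ))) :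
    phiFun α β 0 = 0 ∧ deriv (phiFun α β) 0 = 0 ∧ phiFun α β L = 0 ∧
      deriv (deriv (phiFun α β)) L = 0 := by
  rw [Complex.ext_iff] at h12 h23
  simp [eta1, eta2, eta3, Complex.exp_re, Complex.exp_im, Complex.add_re, Complex.add_im,
    Complex.mul_re, Complex.mul_im] at h12 h23
  set c := Real.cos (β*L) with hcdef
  set s := Real.sin (β*L) with hsdef
  set E := Real.exp (α*L) with hEdef
  set F := Real.exp (-2*α*L) with hFdef
  have hme : Real.exp (-(α*L)) * E = 1 := by rw [hEdef, ← Real.exp_add]; simp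
  have h2e : Real.exp (2*α*L) = E*E := by rw [hEdef, ← Real.exp_add]; ring_nf
  have h4 : E*E*F = 1 := by
    rw [hEdef, hFdef, ← Real.exp_add, ← Real.exp_add, show α*L + α*L + -2*α*L = 0 by ring,
      Real.exp_zero]
  have h3 : s^2 + c^2 = 1 := Real.sin_sq_add_cos_sq (β*L)
  -- h1 : β c = α s
  have h1 : Real.exp (-(α*L)) * (β * c - α * s) = 0 := by linear_combination h12/2
  have h1' : β * c - α * s = 0 := by
    rcases mul_eq_zero.mp h1 with h | h
    · exact absurd h (Real.exp_ne_zero _)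
    · exact h
  have h2 : α * c + β * s = -2*α*E^3 := by
    linear_combination E * h23.1 - (α*c + β*s) * hme - 2*α*E*h2e
  have hs : (α^2+β^2)*s = -2*α*β*E^3 := by linear_combination β*h2 - α*h1'
  have hc : (α^2+β^2)*c = -2*α^2*E^3 := by linear_combination α*h2 + β*h1'
  have hP : α^2+β^2 = 4*α^2*E^6 := by
    linear_combination c*hc + s*hs - 2*α*E^3*h2 - (α^2+β^2)*h3
  have hb2 : 0 < β^2 := by positivity
  have hPne : (α^2+β^2) * E^2 ≠ 0 := by
    have hE : 0 < E := Real.exp_pos _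
    positivity
  refine ⟨?_, ?_, ?_, ?_⟩
  · simp [phiFun]
  · rw [aux_deriv]; simp
  · have key : (α^2+β^2) * E^2 * (-β*E*c + β*F + 3*α*E*s) = 0 := by
      linear_combination (-β*E^3)*hc + (3*α*E^3)*hs + (β*E^2*F)*hP + (4*α^2*β*E^6)*h4
    have hphi : phiFun α β L = -β*E*c + β*F + 3*α*E*s := by
      simp only [phiFun, ← hcdef, ← hsdef, ← hEdef, ← hFdef]
    rw [hphi]
    exact (mul_eq_zero.mp key).resolve_left hPne
  · have key : (α^2+β^2) * E^2 * ((5*α^2*β+β^3)*E*c + (3*α^3-α*β^2)*E*s + 4*α^2*β*F) = 0 := by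
      linear_combination ((5*α^2*β+β^3)*E^3)*hc + ((3*α^3-α*β^2)*E^3)*hs
        + (4*α^2*β*E^2*F)*hP + (16*α^4*β*E^6)*h4
    have hval : deriv (deriv (phiFun α β)) L
        = (5*α^2*β+β^3)*E*c + (3*α^3-α*β^2)*E*s + 4*α^2*β*F := (aux_hasDeriv2 α β L).deriv
    rw [hval]
    exact (mul_eq_zero.mp key).resolve_left hPne
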